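/- Let P be a finite nonempty set of points in ℝ³ and let (c, r) be its smallest enclosing ball (‖p − c‖ ≤ r for all p ∈ P, with r minimal). Then the center c lies in the convex hull of the support points, i.e., c ∈ convexHull ℝ {p ∈ P : ‖p − c‖ = r}. -/

import Mathlib

/-- The center of the smallest enclosing ball lies in the convex
hull of the support points. -/
theorem center_mem_convexHull_support
    (P : Finset (EuclideanSpace ℝ (Fin 3))) (hP : P.Nonempty)
    (c : EuclideanSpace ℝ (Fin 3)) (r : ℝ)
    (henc : ∀ p ∈ P, ‖p - c‖ ≤ r)
    (hmin : ∀ (c' : EuclideanSpace ℝ (Fin 3)) (r' : ℝ),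
      (∀ p ∈ P, ‖p - c'‖ ≤ r') → r ≤ r') :
    c ∈ convexHull ℝ {p : EuclideanSpace ℝ (Fin 3) | p ∈ P ∧ ‖p - c‖ = r} := by
  classical
  by_contra hc
  set S : Finset (EuclideanSpace ℝ (Fin 3)) := P.filter (fun p => ‖p - c‖ = r) with hS
  have hset : {p : EuclideanSpace ℝ (Fin 3) | p ∈ P ∧ ‖p - c‖ = r} = (↑S : Set _) := by
    ext p; simp [hS]
  rw [hset] at hc
  have hr0 : 0 ≤ r := le_trans (norm_nonneg _) (henc _ hP.choose_spec)
  have key : ∃ c' : EuclideanSpace ℝ (Fin 3), ∀ p ∈ P, ‖p - c'‖ < r := by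
    by_cases hSne : S.Nonempty
    · obtain ⟨f, u, hfc, hfS⟩ := geometric_hahn_banach_point_closed
        (convex_convexHull ℝ _) ((S.finite_toSet.isCompact_convexHull (𝕜 := ℝ)).isClosed) hc
      set v : EuclideanSpace ℝ (Fin 3) :=
        (InnerProductSpace.toDual ℝ (EuclideanSpace ℝ (Fin 3))).symm f with hv
      have hfv : ∀ y, (inner ℝ v y : ℝ) = f y := fun y => InnerProductSpace.toDual_symm_apply
      have hpos : ∀ p ∈ S, (0 : ℝ) < inner ℝ v (p - c) := by
        intro p hp
        have h1 : u < f p := hfS p (subset_convexHull ℝ _ hp)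
        have : (inner ℝ v (p - c) : ℝ) = f p - f c := by rw [hfv]; simp
        rw [this]; linarith
      have hvne : v ≠ 0 := by
        obtain ⟨q, hq⟩ := hSne
        intro h0
        have := hpos q hq
        rw [h0, inner_zero_left] at this
        exact lt_irrefl _ this
      have hvpos : (0 : ℝ) < ‖v‖ := norm_pos_iff.mpr hvne
      set g : EuclideanSpace ℝ (Fin 3) → ℝ := fun p =>
        if ‖p - c‖ = r then (inner ℝ v (p - c) : ℝ) / (2 * ‖v‖ ^ 2)
        else (r - ‖p - c‖) / (2 * ‖v‖) with hg
      set ε : ℝ := P.inf' hP g with hε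
      have hεpos : 0 < ε := by
        rw [hε, Finset.lt_inf'_iff]
        intro p hp
        rw [hg]
        by_cases h : ‖p - c‖ = r
        · simp only [h, if_true]
          exact div_pos (hpos p (Finset.mem_filter.mpr ⟨hp, h⟩)) (by positivity)
        · simp only [h, if_false]
          have := lt_of_le_of_ne (henc p hp) h
          exact div_pos (by linarith) (by positivity)
      refine ⟨c + ε • v, fun p hp => ?_⟩
      have hεle : ε ≤ g p := Finset.inf'_le g hp
      have hnorm : ‖p - (c + ε • v)‖ ^ 2 =
          ‖p - c‖ ^ 2 - 2 * (ε * inner ℝ (p - c) v) + ε ^ 2 * ‖v‖ ^ 2 := by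
        have : p - (c + ε • v) = (p - c) - ε • v := by abel
        rw [this, norm_sub_sq_real, real_inner_smul_right, norm_smul]
        simp [mul_pow, abs_of_pos hεpos]
        try ring
      by_cases h : ‖p - c‖ = r
      · have hip : (0 : ℝ) < inner ℝ v (p - c) :=
          hpos p (Finset.mem_filter.mpr ⟨hp, h⟩)
        have h1 : ε * (2 * ‖v‖ ^ 2) ≤ (inner ℝ v (p - c) : ℝ) := by
          rw [hg] at hεle
          simp only [h, if_true] at hεle
          exact (le_div_iff₀ (by positivity)).mp hεle
        have hsym : (inner ℝ (p - c) v : ℝ) = inner ℝ v (p - c) := real_inner_comm _ _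
        have hsq : ‖p - (c + ε • v)‖ ^ 2 < r ^ 2 := by
          rw [hnorm, hsym, h]
          nlinarith [hεpos, hip, h1, sq_nonneg ε]
        exact lt_of_pow_lt_pow_left₀ 2 hr0 hsq
      · have hlt : ‖p - c‖ < r := lt_of_le_of_ne (henc p hp) h
        have h1 : ε * (2 * ‖v‖) ≤ r - ‖p - c‖ := by
          rw [hg] at hεle
          simp only [h, if_false] at hεle
          exact (le_div_iff₀ (by positivity)).mp hεle
        have htri : ‖p - (c + ε • v)‖ ≤ ‖p - c‖ + ε * ‖v‖ := by
          have : p - (c + ε • v) = (p - c) - ε • v := by abel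
          rw [this]
          calc ‖(p - c) - ε • v‖ ≤ ‖p - c‖ + ‖ε • v‖ := norm_sub_le _ _
            _ = ‖p - c‖ + ε * ‖v‖ := by rw [norm_smul, Real.norm_of_nonneg hεpos.le]
        nlinarith [mul_pos hεpos hvpos]
    · refine ⟨c, fun p hp => lt_of_le_of_ne (henc p hp) ?_⟩
      intro he
      exact hSne ⟨p, Finset.mem_filter.mpr ⟨hp, he⟩⟩
  obtain ⟨c', hlt⟩ := key
  have h1 : r ≤ P.sup' hP (fun p => ‖p - c'‖) :=
    hmin c' _ (fun p hp => Finset.le_sup' (fun p => ‖p - c'‖) hp)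
  have h2 : P.sup' hP (fun p => ‖p - c'‖) < r :=
    (Finset.sup'_lt_iff hP).mpr hlt
  linarith
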